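/- With R, S rings, A, B, C unital subrings of R, X : B → A and Y : C → B invertible submodules of R, M, N R-S-bimodules, and g in Hom_{C,S}(CM, CN): the induced maps satisfy (g^Y)^X = g^{XY}, where XY is the invertible A-C-submodule given by the product of X and Y. -/

import Mathlib

open Pointwise

/-- `A` is a unital subring of the (possibly non-unital) ring `R`, with identity element
`oneA` (not necessarily an identity of `R`). -/
structure IsUnitalSubring {R : Type*} [NonUnitalRing R] (A : AddSubgroup R) (oneA : R) : Prop where
  one_mem : oneA ∈ A
  mul_mem : ∀ ⦃a⦄, a ∈ A → ∀ ⦃b⦄, b ∈ A → a * b ∈ A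
  one_mul : ∀ a ∈ A, oneA * a = a
  mul_one : ∀ a ∈ A, a * oneA = a

/-- `X` is an invertible (unital) `A`-`B`-submodule of `R` with inverse `Xinv`:
`X Xinv = A` and `Xinv X = B`, where products denote the additive subgroup generated by
all products (i.e. finite sums of products). -/
structure IsInvertibleSubmodule {R : Type*} [NonUnitalRing R]
    (A B : AddSubgroup R) (oneA oneB : R) (X Xinv : AddSubgroup R) : Prop where
  unitalA : IsUnitalSubring A oneA
  unitalB : IsUnitalSubring B oneB
  smul_mem : ∀ ⦃a⦄, a ∈ A → ∀ ⦃x⦄, x ∈ X → a * x ∈ X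
  mem_smul : ∀ ⦃x⦄, x ∈ X → ∀ ⦃b⦄, b ∈ B → x * b ∈ X
  one_smul : ∀ x ∈ X, oneA * x = x
  smul_one : ∀ x ∈ X, x * oneB = x
  smul_mem' : ∀ ⦃b⦄, b ∈ B → ∀ ⦃y⦄, y ∈ Xinv → b * y ∈ Xinv
  mem_smul' : ∀ ⦃y⦄, y ∈ Xinv → ∀ ⦃a⦄, a ∈ A → y * a ∈ Xinv
  one_smul' : ∀ y ∈ Xinv, oneB * y = y
  smul_one' : ∀ y ∈ Xinv, y * oneA = y
  mul_inv : X * Xinv = A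
  inv_mul : Xinv * X = B

/-- The ring structure on a unital subring of `R`. -/
def IsUnitalSubring.ring {R : Type*} [NonUnitalRing R] {A : AddSubgroup R} {oneA : R}
    (h : IsUnitalSubring A oneA) : Ring A :=
  { (inferInstance : AddCommGroup A) with
    mul := fun a b => ⟨a.1 * b.1, h.mul_mem a.2 b.2⟩
    one := ⟨oneA, h.one_mem⟩
    mul_assoc := fun a b c => Subtype.ext (mul_assoc a.1 b.1 c.1)
    one_mul := fun a => Subtype.ext (h.one_mul a.1 a.2)
    mul_one := fun a => Subtype.ext (h.mul_one a.1 a.2)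
    left_distrib := fun a b c => Subtype.ext (mul_add a.1 b.1 c.1)
    right_distrib := fun a b c => Subtype.ext (add_mul a.1 b.1 c.1)
    zero_mul := fun a => Subtype.ext (zero_mul a.1)
    mul_zero := fun a => Subtype.ext (mul_zero a.1) }


/-- `M` is an `R`-`S`-bimodule via the left action `ρ` and the right action `τ`. -/
structure IsBimodule (R S M : Type*) [NonUnitalRing R] [NonUnitalRing S] [AddCommGroup M]
    (ρ : R → M → M) (τ : M → S → M) : Prop where
  add_smul : ∀ r r' m, ρ (r + r') m = ρ r m + ρ r' m
  smul_add : ∀ r m m', ρ r (m + m') = ρ r m + ρ r m'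
  mul_smul : ∀ r r' m, ρ (r * r') m = ρ r (ρ r' m)
  smul_add' : ∀ m m' s, τ (m + m') s = τ m s + τ m' s
  add_smul' : ∀ m s s', τ m (s + s') = τ m s + τ m s'
  smul_mul' : ∀ m s s', τ m (s * s') = τ (τ m s) s'
  smul_comm : ∀ r m s, τ (ρ r m) s = ρ r (τ m s)

/-- For a subring `A` of `R`, the sub-bimodule `AM` of `M`: the additive subgroup generated
by all products `a • m` with `a ∈ A`, `m ∈ M`. -/
def actSpan {R M : Type*} [NonUnitalRing R] [AddCommGroup M]
    (ρ : R → M → M) (A : AddSubgroup R) : AddSubgroup M :=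
  AddSubgroup.closure {x | ∃ a ∈ A, ∃ m : M, x = ρ a m}

/-- `f` belongs to `Hom_{B,S}(BM, BN)`: it maps `BM` to `BN` and is left `B`-linear and
right `S`-linear there. -/
def IsHomBS {R S M N : Type*} [NonUnitalRing R] [NonUnitalRing S]
    [AddCommGroup M] [AddCommGroup N]
    (B : AddSubgroup R) (ρM : R → M → M) (τM : M → S → M)
    (ρN : R → N → N) (τN : N → S → N) (f : M → N) : Prop :=
  (∀ m ∈ actSpan ρM B, f m ∈ actSpan ρN B) ∧
  (∀ m ∈ actSpan ρM B, ∀ m' ∈ actSpan ρM B, f (m + m') = f m + f m') ∧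
  (∀ b ∈ B, ∀ m ∈ actSpan ρM B, f (ρM b m) = ρN b (f m)) ∧
  (∀ m ∈ actSpan ρM B, ∀ s : S, f (τM m s) = τN (f m) s)

/-- `g` is the map `f^X ∈ Hom_{A,S}(AM, AN)` induced by `f ∈ Hom_{B,S}(BM, BN)` along the
invertible `A`-`B`-submodule `X`, i.e. it is left `A`-linear and right `S`-linear on `AM` and
satisfies `g (x • m) = x • f (1_B • m)` for all `x ∈ X`, `m ∈ M`. -/
def IsInducedMap {R S M N : Type*} [NonUnitalRing R] [NonUnitalRing S]
    [AddCommGroup M] [AddCommGroup N]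
    (A : AddSubgroup R) (oneB : R) (X : AddSubgroup R)
    (ρM : R → M → M) (τM : M → S → M)
    (ρN : R → N → N) (τN : N → S → N) (f g : M → N) : Prop :=
  (∀ m ∈ actSpan ρM A, g m ∈ actSpan ρN A) ∧
  (∀ m ∈ actSpan ρM A, ∀ m' ∈ actSpan ρM A, g (m + m') = g m + g m') ∧
  (∀ a ∈ A, ∀ m ∈ actSpan ρM A, g (ρM a m) = ρN a (g m)) ∧
  (∀ m ∈ actSpan ρM A, ∀ s : S, g (τM m s) = τN (g m) s) ∧
  (∀ x ∈ X, ∀ m : M, g (ρM x m) = ρN x (f (ρM oneB m)))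

/-- For invertible submodules `X : B → A` and `Y : C → B` and
`g ∈ Hom_{C,S}(CM, CN)`, the induced maps satisfy `(g^Y)^X = g^{XY}` (as maps on `AM`). -/
theorem inducedMap_comp {R S M N : Type*} [NonUnitalRing R] [NonUnitalRing S]
    [AddCommGroup M] [AddCommGroup N]
    (A B C : AddSubgroup R) (oneA oneB oneC : R) (X Xinv Y Yinv : AddSubgroup R)
    (hX : IsInvertibleSubmodule A B oneA oneB X Xinv)
    (hY : IsInvertibleSubmodule B C oneB oneC Y Yinv)
    (ρM : R → M → M) (τM : M → S → M) (ρN : R → N → N) (τN : N → S → N)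
    (hM : IsBimodule R S M ρM τM) (hN : IsBimodule R S N ρN τN)
    (g : M → N) (hg : IsHomBS C ρM τM ρN τN g)
    (gY : M → N) (hgY : IsInducedMap B oneC Y ρM τM ρN τN g gY)
    (gYX : M → N) (hgYX : IsInducedMap A oneB X ρM τM ρN τN gY gYX)
    (gXY : M → N) (hgXY : IsInducedMap A oneC (X * Y) ρM τM ρN τN g gXY) :
    Set.EqOn gYX gXY (actSpan ρM A) := by
  -- basic facts
  have memA : ∀ a ∈ A, ∀ m : M, ρM a m ∈ actSpan ρM A := fun a ha m =>
    AddSubgroup.subset_closure ⟨a, ha, m, rfl⟩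
  have memB : ∀ b ∈ B, ∀ m : M, ρM b m ∈ actSpan ρM B := fun b hb m =>
    AddSubgroup.subset_closure ⟨b, hb, m, rfl⟩
  have memX : ∀ x ∈ X, ∀ m : M, ρM x m ∈ actSpan ρM A := by
    intro x hx m
    have : ρM x m = ρM oneA (ρM x m) := by
      rw [← hM.mul_smul, hX.one_smul x hx]
    rw [this]
    exact memA oneA hX.unitalA.one_mem _
  have zeroA : (0 : M) ∈ actSpan ρM A := (actSpan ρM A).zero_mem
  have zeroB : (0 : M) ∈ actSpan ρM B := (actSpan ρM B).zero_mem
  have gXY0 : gXY 0 = 0 := by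
    have := hgXY.2.1 0 zeroA 0 zeroA
    rw [add_zero] at this
    exact left_eq_add.mp this
  have gYX0 : gYX 0 = 0 := by
    have := hgYX.2.1 0 zeroA 0 zeroA
    rw [add_zero] at this
    exact left_eq_add.mp this
  have gY0 : gY 0 = 0 := by
    have := hgY.2.1 0 zeroB 0 zeroB
    rw [add_zero] at this
    exact left_eq_add.mp this
  -- Lemma B : for b ∈ B, x ∈ X, m : M, ρN x (gY (ρM b m)) = gXY (ρM (x*b) m)
  have lemB : ∀ b ∈ B, ∀ x ∈ X, ∀ m : M,
      ρN x (gY (ρM b m)) = gXY (ρM (x * b) m) := by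
    intro b hb
    have hb' : b ∈ Y.toAddSubmonoid * Yinv.toAddSubmonoid := by
      rw [← AddSubgroup.mul_toAddSubmonoid, hY.mul_inv]; exact hb
    refine (AddSubmonoid.mul_induction_on (C := fun b =>
      b ∈ B ∧ ∀ x ∈ X, ∀ m : M, ρN x (gY (ρM b m)) = gXY (ρM (x * b) m)) hb' ?_ ?_).2
    · intro y hy w hw
      constructor
      · rw [← hY.mul_inv]
        exact_mod_cast AddSubmonoid.mul_mem_mul hy hw
      intro x hx m
      have hxy : x * y ∈ X * Y := by
        rw [← AddSubgroup.mul_toAddSubmonoid] at *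
        exact AddSubmonoid.mul_mem_mul hx hy
      rw [hM.mul_smul y w m, hgY.2.2.2.2 y hy, ← hN.mul_smul,
        (mul_assoc x y w).symm, hM.mul_smul,
        hgXY.2.2.2.2 (x * y) hxy]
    · intro b₁ b₂ h₁ h₂
      obtain ⟨hb₁, ih₁⟩ := h₁
      obtain ⟨hb₂, ih₂⟩ := h₂
      refine ⟨B.add_mem hb₁ hb₂, ?_⟩
      intro x hx m
      have hxb₁ : x * b₁ ∈ X := hX.mem_smul hx hb₁
      have hxb₂ : x * b₂ ∈ X := hX.mem_smul hx hb₂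
      rw [hM.add_smul b₁ b₂ m, hgY.2.1 _ (memB b₁ hb₁ m) _ (memB b₂ hb₂ m),
        hN.smul_add, ih₁ x hx m, ih₂ x hx m, mul_add, hM.add_smul,
        hgXY.2.1 _ (memX _ hxb₁ m) _ (memX _ hxb₂ m)]
  -- Lemma C : for x ∈ X, gYX (ρM x m) = gXY (ρM x m)
  have lemC : ∀ x ∈ X, ∀ m : M, gYX (ρM x m) = gXY (ρM x m) := by
    intro x hx m
    rw [hgYX.2.2.2.2 x hx m, lemB oneB hX.unitalB.one_mem x hx m,
      hX.smul_one x hx]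
  -- Lemma D : for a ∈ A, gYX (ρM a m) = gXY (ρM a m)
  have lemD : ∀ a ∈ A, ∀ m : M, gYX (ρM a m) = gXY (ρM a m) := by
    intro a ha
    have ha' : a ∈ X.toAddSubmonoid * Xinv.toAddSubmonoid := by
      rw [← AddSubgroup.mul_toAddSubmonoid, hX.mul_inv]; exact ha
    refine (AddSubmonoid.mul_induction_on (C := fun a =>
      a ∈ A ∧ ∀ m : M, gYX (ρM a m) = gXY (ρM a m)) ha' ?_ ?_).2
    · intro x hx u hu
      constructor
      · rw [← hX.mul_inv]
        exact_mod_cast AddSubmonoid.mul_mem_mul hx hu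
      intro m
      rw [hM.mul_smul x u m]
      exact lemC x hx _
    · intro a₁ a₂ h₁ h₂
      obtain ⟨ha₁, ih₁⟩ := h₁
      obtain ⟨ha₂, ih₂⟩ := h₂
      refine ⟨A.add_mem ha₁ ha₂, ?_⟩
      intro m
      rw [hM.add_smul a₁ a₂ m, hgYX.2.1 _ (memA _ ha₁ m) _ (memA _ ha₂ m),
        hgXY.2.1 _ (memA _ ha₁ m) _ (memA _ ha₂ m), ih₁ m, ih₂ m]
  -- conclude on actSpan ρM A
  intro m hm
  induction hm using AddSubgroup.closure_induction with
  | mem x hx =>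
    obtain ⟨a, ha, m', rfl⟩ := hx
    exact lemD a ha m'
  | zero => simpa using gYX0.trans gXY0.symm
  | add x y hx hy ihx ihy =>
    show gYX (x + y) = gXY (x + y)
    rw [hgYX.2.1 x hx y hy, hgXY.2.1 x hx y hy, ihx, ihy]
  | neg x hx ih =>
    show gYX (-x) = gXY (-x)
    have h1 := hgYX.2.1 x hx (-x) ((actSpan ρM A).neg_mem hx)
    have h2 := hgXY.2.1 x hx (-x) ((actSpan ρM A).neg_mem hx)
    rw [add_neg_cancel] at h1 h2
    rw [gYX0] at h1
    rw [gXY0] at h2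
    have e1 : gYX (-x) = -gYX x := by
      rw [eq_neg_iff_add_eq_zero, add_comm]; exact h1.symm
    have e2 : gXY (-x) = -gXY x := by
      rw [eq_neg_iff_add_eq_zero, add_comm]; exact h2.symm
    rw [e1, e2, ih]
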